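/- arXiv:2012.04786 — 3 statements merged into one kernel-verified Lean document; each statement's English description precedes it below -/
import Mathlib

section
/- If a Markov chain with transition kernel P and stationary distribution π satisfies the uniform minorization condition P^{n_0}(x,·) ≥ ε Q(·) for all x in the state space X (for some n_0 ∈ ℕ, ε > 0, and probability measure Q), then for all n ∈ ℕ and x ∈ X, the total variation distance ‖P^n(x,·) − π(·)‖ is at most (1−ε)^⌊n/n_0⌋. -/
open MeasureTheory
open scoped ENNReal

/-- Auxiliary contraction lemma: if two probability measures both dominate `ε • Q`,
then integrals of a function with oscillation at most `c` differ by at most `(1-ε) * c`. -/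
lemma stmt0_contract {X : Type*} [MeasurableSpace X]
    (Q : Measure X) [IsProbabilityMeasure Q] (ε : ℝ) (hε : 0 < ε) (hε1 : ε ≤ 1)
    (μ ν : Measure X) [IsProbabilityMeasure μ] [IsProbabilityMeasure ν]
    (hμ : ENNReal.ofReal ε • Q ≤ μ) (hν : ENNReal.ofReal ε • Q ≤ ν)
    (f : X → ℝ≥0∞) (hf : Measurable f) (c : ℝ≥0∞)
    (hfc : ∀ z w, f z ≤ f w + c) :
    ∫⁻ z, f z ∂μ ≤ (∫⁻ z, f z ∂ν) + ENNReal.ofReal (1 - ε) * c := by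
  set e : ℝ≥0∞ := ENNReal.ofReal ε with he
  set M : ℝ≥0∞ := ENNReal.ofReal (1 - ε) with hM
  have hefin : IsFiniteMeasure (e • Q) := Q.smul_finite (by simp [he])
  set μ' : Measure X := μ - e • Q with hμ'
  set ν' : Measure X := ν - e • Q with hν'
  have hμdec : μ = μ' + e • Q := (Measure.sub_add_cancel_of_le hμ).symm
  have hνdec : ν = ν' + e • Q := (Measure.sub_add_cancel_of_le hν).symm
  have hMe : M = 1 - e := by
    rw [hM, he, ← ENNReal.ofReal_one, ← ENNReal.ofReal_sub _ hε.le]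
  have hμ'univ : μ' Set.univ = M := by
    rw [hμ', Measure.sub_apply MeasurableSet.univ hμ, hMe]
    simp [measure_univ]
  have hν'univ : ν' Set.univ = M := by
    rw [hν', Measure.sub_apply MeasurableSet.univ hν, hMe]
    simp [measure_univ]
  have key : ∫⁻ z, f z ∂μ' ≤ (∫⁻ z, f z ∂ν') + c * M := by
    rcases eq_or_ne M 0 with hM0 | hM0
    · have : μ' = 0 := by
        rw [← Measure.measure_univ_eq_zero, hμ'univ, hM0]
      simp [this]
    · have hMtop : M ≠ ⊤ := by simp [hM]
      have step : ∀ w, ∫⁻ z, f z ∂μ' ≤ (f w + c) * M := by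
        intro w
        calc ∫⁻ z, f z ∂μ' ≤ ∫⁻ _, (f w + c) ∂μ' := lintegral_mono fun z => hfc z w
          _ = (f w + c) * M := by rw [lintegral_const, hμ'univ]
      have h2 : M * ∫⁻ z, f z ∂μ' ≤ M * ((∫⁻ z, f z ∂ν') + c * M) := by
        calc M * ∫⁻ z, f z ∂μ'
            = ∫⁻ w, ∫⁻ z, f z ∂μ' ∂ν' := by rw [lintegral_const, hν'univ, mul_comm]
          _ ≤ ∫⁻ w, (f w + c) * M ∂ν' := lintegral_mono fun w => step w
          _ = (∫⁻ w, (f w + c) ∂ν') * M := lintegral_mul_const M (hf.add measurable_const)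
          _ = ((∫⁻ w, f w ∂ν') + c * M) * M := by
              rw [lintegral_add_right _ measurable_const, lintegral_const, hν'univ]
          _ = M * ((∫⁻ z, f z ∂ν') + c * M) := mul_comm _ _
      exact (ENNReal.mul_le_mul_iff_right hM0 hMtop).mp h2
  calc ∫⁻ z, f z ∂μ = (∫⁻ z, f z ∂μ') + ∫⁻ z, f z ∂(e • Q) := by
        conv_lhs => rw [hμdec]
        rw [lintegral_add_measure]
    _ ≤ ((∫⁻ z, f z ∂ν') + c * M) + ∫⁻ z, f z ∂(e • Q) := by
        exact add_le_add_left key _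
    _ = ((∫⁻ z, f z ∂ν') + ∫⁻ z, f z ∂(e • Q)) + M * c := by ring
    _ = (∫⁻ z, f z ∂ν) + M * c := by
        conv_rhs => rw [hνdec]
        rw [lintegral_add_measure]

/-- a uniform minorization condition implies uniform ergodicity with
explicit rate `(1-ε)^⌊n/n₀⌋`.  Here `Pn n x` denotes the `n`-step transition
probabilities `P^n(x,·)` of the chain with one-step kernel `P`, and `π` is a
stationary distribution. -/
theorem stmt0 {X : Type*} [MeasurableSpace X]
    (P : X → Measure X) (hPm : Measurable P)
    (hP : ∀ x, IsProbabilityMeasure (P x))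
    (π Q : Measure X) [IsProbabilityMeasure π] [IsProbabilityMeasure Q]
    (hstat : π.bind P = π)
    (Pn : ℕ → X → Measure X)
    (hPn0 : ∀ x, Pn 0 x = Measure.dirac x)
    (hPnS : ∀ n x, Pn (n+1) x = (Pn n x).bind P)
    (n₀ : ℕ) (hn₀ : 0 < n₀) (ε : ℝ) (hε : 0 < ε) (hε1 : ε ≤ 1)
    (hminor : ∀ x S, MeasurableSet S → ENNReal.ofReal ε * Q S ≤ Pn n₀ x S)
    (n : ℕ) (x : X) (S : Set X) (hS : MeasurableSet S) :
    |(Pn n x S).toReal - (π S).toReal| ≤ (1 - ε) ^ (n / n₀) := by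
  -- measurability of the n-step kernels
  have hPnMeas : ∀ m, Measurable (Pn m) := by
    intro m
    induction m with
    | zero =>
        have : Pn 0 = Measure.dirac := funext hPn0
        rw [this]; exact Measure.measurable_dirac
    | succ m ih =>
        have : Pn (m+1) = fun y => (Pn m y).bind P := funext fun y => hPnS m y
        rw [this]
        exact (Measure.measurable_bind' hPm).comp ih
  -- the n-step kernels are probability measures
  have hPnProb : ∀ m y, IsProbabilityMeasure (Pn m y) := by
    intro m
    induction m with
    | zero => intro y; rw [hPn0]; infer_instance
    | succ m ih =>
        intro y
        constructor
        rw [hPnS, Measure.bind_apply MeasurableSet.univ hPm.aemeasurable]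
        have : ∀ z, P z Set.univ = 1 := fun z => (hP z).measure_univ
        simp only [this, lintegral_one]
        exact (ih y).measure_univ
  -- semigroup property
  have hPnAdd : ∀ a b y, Pn (a + b) y = (Pn b y).bind (Pn a) := by
    intro a
    induction a with
    | zero =>
        intro b y
        have h0 : Pn 0 = Measure.dirac := funext hPn0
        simp [h0, Measure.bind_dirac]
    | succ a ih =>
        intro b y
        have : a + 1 + b = (a + b) + 1 := by ring
        rw [this, hPnS, ih b y, Measure.bind_bind (hPnMeas a).aemeasurable hPm.aemeasurable]
        congr 1
        funext z
        rw [← hPnS]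
  -- stationarity of π for all n-step kernels
  have hπn : ∀ m, π.bind (Pn m) = π := by
    intro m
    induction m with
    | zero =>
        have h0 : Pn 0 = Measure.dirac := funext hPn0
        simp [h0, Measure.bind_dirac]
    | succ m ih =>
        have h1 : π.bind (Pn (m+1)) = π.bind (fun y => (Pn m y).bind P) := by
          congr 1; funext y; rw [hPnS]
        rw [h1, ← Measure.bind_bind (hPnMeas m).aemeasurable hPm.aemeasurable, ih, hstat]
  -- minorization as measure inequality
  have hminor' : ∀ y, ENNReal.ofReal ε • Q ≤ Pn n₀ y := by
    intro y
    rw [Measure.le_iff]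
    intro s hs
    simpa [Measure.smul_apply] using hminor y s hs
  -- key contraction estimate
  have key : ∀ k m y z, Pn (k * n₀ + m) y S ≤ Pn (k * n₀ + m) z S
      + ENNReal.ofReal ((1 - ε) ^ k) := by
    intro k
    induction k with
    | zero =>
        intro m y z
        have h1 : Pn (0 * n₀ + m) y S ≤ 1 := prob_le_one
        calc Pn (0 * n₀ + m) y S ≤ 1 := h1
          _ ≤ Pn (0 * n₀ + m) z S + ENNReal.ofReal ((1 - ε) ^ 0) := by
              simp
    | succ k ih =>
        intro m y z
        have harith : (k + 1) * n₀ + m = (k * n₀ + m) + n₀ := by ring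
        set j := k * n₀ + m with hj
        have hrw : ∀ w, Pn ((k+1) * n₀ + m) w S = ∫⁻ u, Pn j u S ∂(Pn n₀ w) := by
          intro w
          rw [harith, hPnAdd j n₀ w, Measure.bind_apply hS (hPnMeas j).aemeasurable]
        have hfmeas : Measurable fun u => Pn j u S :=
          (Measure.measurable_coe hS).comp (hPnMeas j)
        have hosc : ∀ u v, Pn j u S ≤ Pn j v S + ENNReal.ofReal ((1 - ε) ^ k) := fun u v => ih m u v
        have hprobY : IsProbabilityMeasure (Pn n₀ y) := hPnProb n₀ y
        have hprobZ : IsProbabilityMeasure (Pn n₀ z) := hPnProb n₀ z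
        have := stmt0_contract Q ε hε hε1 (Pn n₀ y) (Pn n₀ z) (hminor' y) (hminor' z)
          (fun u => Pn j u S) hfmeas (ENNReal.ofReal ((1 - ε) ^ k)) hosc
        rw [hrw y, hrw z]
        calc ∫⁻ u, Pn j u S ∂(Pn n₀ y)
            ≤ (∫⁻ u, Pn j u S ∂(Pn n₀ z))
              + ENNReal.ofReal (1 - ε) * ENNReal.ofReal ((1 - ε) ^ k) := this
          _ = (∫⁻ u, Pn j u S ∂(Pn n₀ z)) + ENNReal.ofReal ((1 - ε) ^ (k+1)) := by
              rw [← ENNReal.ofReal_mul (by linarith), pow_succ, mul_comm]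
  -- apply with k = n / n₀, m = n % n₀
  set k := n / n₀ with hk
  set c : ℝ≥0∞ := ENNReal.ofReal ((1 - ε) ^ k) with hc
  have hn : n = k * n₀ + n % n₀ := by
    rw [hk, mul_comm, Nat.div_add_mod]
  have keyn : ∀ y z, Pn n y S ≤ Pn n z S + c := by
    intro y z
    rw [hn]
    exact key k (n % n₀) y z
  have hπS : π S = ∫⁻ y, Pn n y S ∂π := by
    conv_lhs => rw [← hπn n]
    rw [Measure.bind_apply hS (hPnMeas n).aemeasurable]
  have hfmeas : Measurable fun y => Pn n y S := (Measure.measurable_coe hS).comp (hPnMeas n)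
  have hub : Pn n x S ≤ π S + c := by
    calc Pn n x S = ∫⁻ _, Pn n x S ∂π := by rw [lintegral_const, measure_univ, mul_one]
      _ ≤ ∫⁻ y, (Pn n y S + c) ∂π := lintegral_mono fun y => keyn x y
      _ = (∫⁻ y, Pn n y S ∂π) + c := by
          rw [lintegral_add_right _ measurable_const, lintegral_const, measure_univ, mul_one]
      _ = π S + c := by rw [hπS]
  have hlb : π S ≤ Pn n x S + c := by
    calc π S = ∫⁻ y, Pn n y S ∂π := hπS
      _ ≤ ∫⁻ _, (Pn n x S + c) ∂π := lintegral_mono fun y => keyn y x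
      _ = Pn n x S + c := by rw [lintegral_const, measure_univ, mul_one]
  -- convert to reals
  have hcr : (0:ℝ) ≤ (1 - ε) ^ k := pow_nonneg (by linarith) k
  have hxfin : Pn n x S ≠ ⊤ := (measure_lt_top _ _).ne
  have hπfin : π S ≠ ⊤ := (measure_lt_top _ _).ne
  rw [abs_sub_le_iff]
  constructor
  · have h1 : (Pn n x S).toReal ≤ (π S + c).toReal :=
      ENNReal.toReal_mono (by finiteness) hub
    rw [ENNReal.toReal_add hπfin (by finiteness), hc, ENNReal.toReal_ofReal hcr] at h1
    linarith
  · have h1 : (π S).toReal ≤ (Pn n x S + c).toReal :=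
      ENNReal.toReal_mono (by finiteness) hlb
    rw [ENNReal.toReal_add hxfin (by finiteness), hc, ENNReal.toReal_ofReal hcr] at h1
    linarith
end

section
/- Suppose a φ-irreducible Markov chain with transition kernel P and stationary distribution π satisfies the drift condition PV(x) ≤ λV(x) + b·1_C(x) for all x, for some measurable V : X → [1,∞] which is π-a.e. finite, measurable set C, 0 < λ < 1 and b < ∞. Then E_π(V) ≤ b/(1−λ). -/
open MeasureTheory Filter

/-- Lemma 2: for a φ-irreducible Markov chain with stationary
distribution π satisfying the univariate drift condition
`PV(x) ≤ λ V(x) + b 1_C(x)` with `V ≥ 1` π-a.e. finite, one has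
`E_π(V) ≤ b/(1-λ)`. -/
theorem stmt6 {X : Type*} [MeasurableSpace X]
    (P : X → Measure X) (hPm : Measurable P)
    (hP : ∀ x, IsProbabilityMeasure (P x))
    (π : Measure X) [IsProbabilityMeasure π]
    (hstat : π.bind P = π)
    (Pn : ℕ → X → Measure X)
    (hPn0 : ∀ x, Pn 0 x = Measure.dirac x)
    (hPnS : ∀ n x, Pn (n+1) x = (Pn n x).bind P)
    -- φ-irreducibility
    (φ : Measure X) (hφ : φ ≠ 0)
    (hirr : ∀ S, MeasurableSet S → 0 < φ S → ∀ x, ∃ n, 0 < Pn n x S)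
    (V : X → ENNReal) (hV : Measurable V) (hV1 : ∀ x, 1 ≤ V x)
    (hVfin : ∀ᵐ x ∂π, V x < ⊤)
    (C : Set X) (hC : MeasurableSet C)
    (lam b : ℝ) (hlam0 : 0 < lam) (hlam1 : lam < 1) (hb : 0 ≤ b)
    (hdrift : ∀ x, ∫⁻ y, V y ∂(P x) ≤
      ENNReal.ofReal lam * V x + ENNReal.ofReal b * C.indicator (fun _ => (1:ENNReal)) x) :
    ∫⁻ x, V x ∂π ≤ ENNReal.ofReal (b / (1 - lam)) := by
  classical
  set l : ENNReal := ENNReal.ofReal lam with hl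
  set β : ENNReal := ENNReal.ofReal (b / (1 - lam)) with hβ
  have hl1 : l < 1 := by
    rw [hl]; exact ENNReal.ofReal_lt_one.mpr hlam1
  -- measurability of the n-step kernels
  have hPnm : ∀ n, Measurable (Pn n) := by
    intro n
    induction n with
    | zero =>
        have : Pn 0 = fun x => Measure.dirac x := funext hPn0
        rw [this]; exact Measure.measurable_dirac
    | succ n ih =>
        have : Pn (n+1) = fun x => (Pn n x).bind P := funext (hPnS n)
        rw [this]; exact (Measure.measurable_bind' hPm).comp ih
  -- the n-step kernels are probability measures
  have hPnP : ∀ n x, IsProbabilityMeasure (Pn n x) := by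
    intro n
    induction n with
    | zero => intro x; rw [hPn0]; infer_instance
    | succ n ih =>
        intro x
        constructor
        rw [hPnS, Measure.bind_apply MeasurableSet.univ hPm.aemeasurable]
        have h1 : ∀ z, P z Set.univ = 1 := fun z => (hP z).measure_univ
        simp only [h1, lintegral_const, one_mul, (ih x).measure_univ]
  -- iterated drift bound : ∫ V dPⁿ ≤ lⁿ V x + b ∑_{k<n} lᵏ
  have hgeom : ∀ n x, ∫⁻ y, V y ∂(Pn n x) ≤
      l ^ n * V x + ENNReal.ofReal b * ∑ k ∈ Finset.range n, l ^ k := by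
    intro n
    induction n with
    | zero =>
        intro x
        rw [hPn0, lintegral_dirac' x hV]
        simp
    | succ n ih =>
        intro x
        rw [hPnS, Measure.lintegral_bind hPm.aemeasurable hV.aemeasurable]
        calc ∫⁻ z, ∫⁻ y, V y ∂(P z) ∂(Pn n x)
            ≤ ∫⁻ z, (l * V z + ENNReal.ofReal b * C.indicator (fun _ => (1:ENNReal)) z)
              ∂(Pn n x) := lintegral_mono hdrift
          _ = l * ∫⁻ z, V z ∂(Pn n x)
              + ENNReal.ofReal b * (Pn n x) C := by
              rw [lintegral_add_left (hV.const_mul l),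
                lintegral_const_mul _ hV, lintegral_const_mul _
                  (measurable_const.indicator hC)]
              congr 1
              exact congrArg _ (lintegral_indicator_one hC)
          _ ≤ l * (l ^ n * V x + ENNReal.ofReal b * ∑ k ∈ Finset.range n, l ^ k)
              + ENNReal.ofReal b * 1 := by
              gcongr
              · exact ih x
              · exact prob_le_one
          _ = l ^ (n+1) * V x + ENNReal.ofReal b * ∑ k ∈ Finset.range (n+1), l ^ k := by
              rw [geom_sum_succ]
              ring
  -- bound the geometric sum by β
  have hsum : ∀ n, ENNReal.ofReal b * ∑ k ∈ Finset.range n, l ^ k ≤ β := by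
    intro n
    have h1 : ∑ k ∈ Finset.range n, l ^ k
        = ENNReal.ofReal (∑ k ∈ Finset.range n, lam ^ k) := by
      rw [ENNReal.ofReal_sum_of_nonneg (fun k _ => pow_nonneg hlam0.le k)]
      exact Finset.sum_congr rfl fun k _ => by
        rw [hl, ← ENNReal.ofReal_pow hlam0.le]
    have h2 : (∑ k ∈ Finset.range n, lam ^ k) ≤ (1 - lam)⁻¹ := by
      have := Summable.sum_le_tsum (Finset.range n) (fun k _ => pow_nonneg hlam0.le k)
        (summable_geometric_of_lt_one hlam0.le hlam1)
      rwa [tsum_geometric_of_lt_one hlam0.le hlam1] at this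
    calc ENNReal.ofReal b * ∑ k ∈ Finset.range n, l ^ k
        ≤ ENNReal.ofReal b * ENNReal.ofReal (1 - lam)⁻¹ := by
          rw [h1]; exact mul_le_mul_right (ENNReal.ofReal_le_ofReal h2) _
      _ = β := by
          rw [hβ, ← ENNReal.ofReal_mul hb, div_eq_mul_inv]
  have hdriftn : ∀ n x, ∫⁻ y, V y ∂(Pn n x) ≤ l ^ n * V x + β := fun n x =>
    (hgeom n x).trans (add_le_add_right (hsum n) _)
  -- stationarity of π for the n-step kernels, in lintegral form
  have hstatn : ∀ n (f : X → ENNReal), Measurable f →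
      ∫⁻ x, ∫⁻ y, f y ∂(Pn n x) ∂π = ∫⁻ x, f x ∂π := by
    intro n
    induction n with
    | zero =>
        intro f hf
        simp only [hPn0, lintegral_dirac' _ hf]
    | succ n ih =>
        intro f hf
        have hg : Measurable fun z => ∫⁻ y, f y ∂(P z) :=
          (Measure.measurable_lintegral hf).comp hPm
        calc ∫⁻ x, ∫⁻ y, f y ∂(Pn (n+1) x) ∂π
            = ∫⁻ x, ∫⁻ z, ∫⁻ y, f y ∂(P z) ∂(Pn n x) ∂π := by
              simp only [hPnS, Measure.lintegral_bind hPm.aemeasurable hf.aemeasurable]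
          _ = ∫⁻ z, ∫⁻ y, f y ∂(P z) ∂π := ih _ hg
          _ = ∫⁻ y, f y ∂(π.bind P) := (Measure.lintegral_bind hPm.aemeasurable hf.aemeasurable).symm
          _ = ∫⁻ x, f x ∂π := by rw [hstat]
  -- truncated bound: for every M ≠ ⊤, ∫ min(V,M) dπ ≤ β
  have htrunc : ∀ M : ENNReal, M ≠ ⊤ → ∫⁻ x, min (V x) M ∂π ≤ β := by
    intro M hM
    have hVM : Measurable fun x => min (V x) M := hV.min measurable_const
    -- for each n, ∫ min(V,M) dπ ≤ ∫ min(lⁿ V + β, M) dπ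
    have hstep : ∀ n, ∫⁻ x, min (V x) M ∂π ≤ ∫⁻ x, min (l ^ n * V x + β) M ∂π := by
      intro n
      rw [← hstatn n _ hVM]
      refine lintegral_mono fun x => ?_
      have h1 : ∫⁻ y, min (V y) M ∂(Pn n x) ≤ min (∫⁻ y, V y ∂(Pn n x)) M := by
        refine le_min (lintegral_mono fun y => min_le_left _ _) ?_
        calc ∫⁻ y, min (V y) M ∂(Pn n x) ≤ ∫⁻ _, M ∂(Pn n x) :=
              lintegral_mono fun y => min_le_right _ _
          _ = M := by rw [lintegral_const, (hPnP n x).measure_univ, mul_one]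
      exact h1.trans (min_le_min_right M (hdriftn n x))
    -- the right-hand side tends to min β M ≤ β by dominated convergence
    have htend : Tendsto (fun n => ∫⁻ x, min (l ^ n * V x + β) M ∂π) atTop
        (nhds (∫⁻ _, min β M ∂π)) := by
      refine tendsto_lintegral_of_dominated_convergence (fun _ => M)
        (fun n => ((measurable_const.mul hV).add measurable_const).min measurable_const)
        (fun n => Filter.Eventually.of_forall fun x => min_le_right _ _) ?_ ?_
      · rw [lintegral_const, measure_univ, mul_one]; exact hM.lt_top.ne
      · filter_upwards [hVfin] with x hx
        have h0 : Tendsto (fun n => l ^ n * V x) atTop (nhds 0) := by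
          have := ENNReal.Tendsto.mul_const (ENNReal.tendsto_pow_atTop_nhds_zero_of_lt_one hl1)
            (b := V x) (Or.inr hx.ne)
          simpa using this
        have h1 : Tendsto (fun n => l ^ n * V x + β) atTop (nhds β) := by
          have := h0.add (tendsto_const_nhds (x := β))
          simpa using this
        exact h1.min tendsto_const_nhds
    have hlim : (∫⁻ _, min β M ∂π) ≤ β := by
      rw [lintegral_const, measure_univ, mul_one]
      exact min_le_left _ _
    exact le_trans (ge_of_tendsto' htend hstep) hlim
  -- monotone convergence in M
  have hsup : ∀ x, ⨆ n : ℕ, min (V x) (n : ENNReal) = V x := by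
    intro x
    rw [← inf_iSup_eq (f := fun n : ℕ => (n : ENNReal)) (a := V x)]
    · simp [ENNReal.iSup_natCast]
  have hmono : Monotone fun n : ℕ => fun x => min (V x) (n : ENNReal) := by
    intro m n hmn x
    exact min_le_min_left _ (by exact_mod_cast Nat.cast_le.mpr hmn)
  calc ∫⁻ x, V x ∂π = ∫⁻ x, ⨆ n : ℕ, min (V x) (n : ENNReal) ∂π := by
        simp only [hsup]
    _ = ⨆ n : ℕ, ∫⁻ x, min (V x) (n : ENNReal) ∂π :=
        lintegral_iSup (fun n => hV.min measurable_const) (fun m n hmn x => hmono hmn x)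
    _ ≤ β := iSup_le fun n => htrunc n (ENNReal.natCast_ne_top n)
end

section
/- For r_x > 4, ∫_{r_x−1}^{r_x} e^{(1/2)(r + 1/r)} r dr ≤ e^{(1/2)(r_x + 1/r_x)} · ( (840e^{−11/24} − 576)/121 + (24(1 − e^{−11/24})/11)·r_x ). -/
theorem stmt10 (rx : ℝ) (h : 4 < rx) :
    (∫ r in (rx-1)..rx, Real.exp ((1/2) * (r + 1/r)) * r)
      ≤ Real.exp ((1/2) * (rx + 1/rx)) *
        ((840 * Real.exp (-(11/24)) - 576) / 121 +
          (24 * (1 - Real.exp (-(11/24))) / 11) * rx) := by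
  have hle : rx - 1 ≤ rx := by linarith
  have hx0 : (0:ℝ) < rx := by linarith
  -- the comparison function
  set A : ℝ := (1/2) * (rx + 1/rx) with hA
  have hmono : (∫ r in (rx-1)..rx, Real.exp ((1/2) * (r + 1/r)) * r)
      ≤ ∫ r in (rx-1)..rx, Real.exp A * (Real.exp ((11/24) * (r - rx)) * r) := by
    apply intervalIntegral.integral_mono_on hle
    · apply ContinuousOn.intervalIntegrable
      apply ContinuousOn.mul _ continuousOn_id
      apply Real.continuousOn_exp.comp
      · apply ContinuousOn.mul continuousOn_const
        apply ContinuousOn.add continuousOn_id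
        apply ContinuousOn.div continuousOn_const continuousOn_id
        intro x hx
        rw [Set.uIcc_of_le hle] at hx
        have := hx.1; intro h0; simp only [id_eq] at h0; linarith
      · exact Set.mapsTo_univ _ _
    · apply ContinuousOn.intervalIntegrable
      exact (continuousOn_const.mul ((Real.continuous_exp.comp
        (by continuity)).continuousOn.mul continuousOn_id))
    · intro r hr
      have hr1 : rx - 1 ≤ r := hr.1
      have hr2 : r ≤ rx := hr.2
      have hr0 : (0:ℝ) < r := by linarith
      have hkey : (1/2) * (r + 1/r) ≤ A + (11/24) * (r - rx) := by
        have h12 : (12:ℝ) ≤ r * rx := by nlinarith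
        have h3 : 1/r - 1/rx ≤ (rx - r)/12 := by
          have heq : 1/r - 1/rx = (rx - r)/(r*rx) := by
            field_simp
          rw [heq]
          exact div_le_div_of_nonneg_left (by linarith) (by norm_num) h12
        rw [hA]; linarith
      calc Real.exp ((1/2) * (r + 1/r)) * r
          ≤ Real.exp (A + (11/24) * (r - rx)) * r := by
            apply mul_le_mul_of_nonneg_right (Real.exp_le_exp.mpr hkey) hr0.le
        _ = Real.exp A * (Real.exp ((11/24) * (r - rx)) * r) := by
            rw [Real.exp_add, mul_assoc]
  refine hmono.trans ?_
  rw [intervalIntegral.integral_const_mul]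
  apply mul_le_mul_of_nonneg_left _ (Real.exp_nonneg A)
  -- compute the integral exactly
  have hder : ∀ r ∈ Set.uIcc (rx-1) rx,
      HasDerivAt (fun t => Real.exp ((11/24) * (t - rx)) * ((24/11) * t - 576/121))
        (Real.exp ((11/24) * (r - rx)) * r) r := by
    intro r _
    have h1 : HasDerivAt (fun t : ℝ => (11/24) * (t - rx)) (11/24) r := by
      simpa using ((hasDerivAt_id r).sub_const rx).const_mul (11/24 : ℝ)
    have h2 := (h1.exp).mul (((hasDerivAt_id r).const_mul (24/11 : ℝ)).sub_const (576/121))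
    refine HasDerivAt.congr_deriv h2 ?_
    simp only [id_eq]
    ring
  have hint : (∫ r in (rx-1)..rx, Real.exp ((11/24) * (r - rx)) * r)
      = Real.exp ((11/24) * (rx - rx)) * ((24/11) * rx - 576/121)
        - Real.exp ((11/24) * ((rx-1) - rx)) * ((24/11) * (rx-1) - 576/121) := by
    apply intervalIntegral.integral_eq_sub_of_hasDerivAt hder
    apply ContinuousOn.intervalIntegrable
    exact ((Real.continuous_exp.comp (by continuity)).continuousOn.mul continuousOn_id)
  rw [hint]
  have : (11/24 : ℝ) * ((rx-1) - rx) = -(11/24) := by ring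
  rw [this, sub_self, mul_zero, Real.exp_zero]
  ring_nf
  nlinarith [Real.exp_nonneg (-(11/24:ℝ))]
end
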